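/- arXiv:1208.3861 — 2 statements merged into one kernel-verified Lean document; each statement's English description precedes it below -/
import Mathlib

section
/- Let ξ and ξ′ be the functions on ℝ⁴ × ℝ⁴ given by ξ((q₁,q₂,p₁,p₂),(q₁′,q₂′,p₁′,p₂′)) = ½(q₁p₁′ + q₂p₂′ − p₁q₁′ − p₂q₂′) and ξ′((q₁,q₂,p₁,p₂),(q₁′,q₂′,p₁′,p₂′)) = ½(p₁p₂′ − p₂p₁′). Then the difference ξ₁ := ξ − ξ′ is not a coboundary: there is no function ζ : ℝ⁴ → ℝ such that ξ₁(g′,g) = ζ(g′) + ζ(g) − ζ(g′+g) for all g,g′ ∈ ℝ⁴. Hence ξ and ξ′ are inequivalent local exponents of the additive group (ℝ⁴, +). -/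
noncomputable section

/-- `G_T = (ℝ⁴, +)`, with a generic element written `(q₁, q₂, p₁, p₂)`. -/
abbrev GT := ℝ × ℝ × ℝ × ℝ

/-- `ξ((q₁,q₂,p₁,p₂),(q₁′,q₂′,p₁′,p₂′)) = ½(q₁p₁′ + q₂p₂′ − p₁q₁′ − p₂q₂′)`. -/
def xi (g g' : GT) : ℝ :=
  (1 / 2) * (g.1 * g'.2.2.1 + g.2.1 * g'.2.2.2 - g.2.2.1 * g'.1 - g.2.2.2 * g'.2.1)

/-- `ξ′((q₁,q₂,p₁,p₂),(q₁′,q₂′,p₁′,p₂′)) = ½(p₁p₂′ − p₂p₁′)`. -/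
def xi' (g g' : GT) : ℝ :=
  (1 / 2) * (g.2.2.1 * g'.2.2.2 - g.2.2.2 * g'.2.2.1)

/-- The difference `ξ₁ = ξ − ξ′` is not a coboundary of `(ℝ⁴, +)`: there is no
`ζ : ℝ⁴ → ℝ` with `ξ₁(g′,g) = ζ(g′) + ζ(g) − ζ(g′ + g)` for all `g, g′`.
Hence the local exponents `ξ` and `ξ′` are inequivalent. -/
theorem xi_sub_xi'_not_coboundary :
    ¬ ∃ ζ : GT → ℝ, ∀ g g' : GT,
      xi g' g - xi' g' g = ζ g' + ζ g - ζ (g' + g) := by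
  rintro ⟨ζ, h⟩
  have h1 := h (0, 0, 1, 0) (1, 0, 0, 0)
  have h2 := h (1, 0, 0, 0) (0, 0, 1, 0)
  simp only [xi, xi'] at h1 h2
  rw [add_comm] at h1
  norm_num at h1 h2
  linarith
end
end

section
/- Fix real numbers α, β, γ. On the Schwartz space 𝒮(ℝ², ℂ), with variables written (s₁, s₂), define the linear operators (P̂₁ f)(s₁,s₂) = −s₁ f(s₁,s₂), (Q̂₁ f)(s₁,s₂) = β s₂ f(s₁,s₂) − iα ∂f/∂s₁ (s₁,s₂), (P̂₂ f)(s₁,s₂) = α s₂ f(s₁,s₂) − iγ ∂f/∂s₁ (s₁,s₂), (Q̂₂ f)(s₁,s₂) = i ∂f/∂s₂ (s₁,s₂). Then these operators map 𝒮(ℝ², ℂ) to itself and satisfy [Q̂_j, P̂_k] = iα δ_{jk} I for j, k = 1, 2, [Q̂₁, Q̂₂] = −iβ I, and [P̂₁, P̂₂] = −iγ I, where [A, B] = AB − BA and I is the identity operator on 𝒮(ℝ², ℂ). -/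
noncomputable section

/-- Schwartz space `𝒮(ℝ², ℂ)`, with variables written `(s₁, s₂)` (i.e. `s 0, s 1`). -/
abbrev Sch := SchwartzMap (Fin 2 → ℝ) ℂ

namespace TripleExtAux

open SchwartzMap

/-- Multiplication by the `j`-th coordinate, as an `ℝ`-continuous linear map. -/
def mulCoordR (j : Fin 2) : Sch →L[ℝ] Sch :=
  SchwartzMap.bilinLeftCLM
    ((ContinuousLinearMap.lsmul ℝ ℝ : ℝ →L[ℝ] ℂ →L[ℝ] ℂ).flip)
    ((ContinuousLinearMap.proj j : (Fin 2 → ℝ) →L[ℝ] ℝ).hasTemperateGrowth)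

lemma mulCoordR_apply (j : Fin 2) (f : Sch) (x : Fin 2 → ℝ) :
    mulCoordR j f x = ((x j : ℝ) : ℂ) * f x := by
  show (x j : ℝ) • f x = ((x j : ℝ) : ℂ) * f x
  rw [Complex.real_smul]

/-- Multiplication by the `j`-th coordinate, as a `ℂ`-linear map. -/
def M (j : Fin 2) : Sch →ₗ[ℂ] Sch where
  toFun := mulCoordR j
  map_add' f g := by ext x; simp [mulCoordR_apply, mul_add]
  map_smul' c f := by
    ext x
    simp only [mulCoordR_apply, SchwartzMap.smul_apply, smul_eq_mul, RingHom.id_apply]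
    ring

lemma M_apply (j : Fin 2) (f : Sch) (x : Fin 2 → ℝ) :
    M j f x = ((x j : ℝ) : ℂ) * f x := mulCoordR_apply j f x

/-- Directional derivative as a `ℂ`-linear map. -/
def Dv (v : Fin 2 → ℝ) : Sch →ₗ[ℂ] Sch := (LineDeriv.lineDerivOpCLM ℂ Sch v).toLinearMap

lemma Dv_apply (v : Fin 2 → ℝ) (f : Sch) (x : Fin 2 → ℝ) :
    Dv v f x = fderiv ℝ (⇑f) x v := rfl

lemma pd_coe (v : Fin 2 → ℝ) (f : Sch) :
    (fun x => fderiv ℝ (⇑f) x v) = ⇑(LineDeriv.lineDerivOpCLM ℂ Sch v f) := by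
  funext x; exact (SchwartzMap.lineDerivOp_apply_eq_fderiv v f x).symm

lemma pd_diff (v : Fin 2 → ℝ) (f : Sch) (s : Fin 2 → ℝ) :
    DifferentiableAt ℝ (fun x => fderiv ℝ (⇑f) x v) s := by
  rw [pd_coe]; exact (LineDeriv.lineDerivOpCLM ℂ Sch v f).differentiableAt

/-- Product rule for multiplication by a coordinate. -/
lemma fderiv_coord_mul (j : Fin 2) (f : Sch) (s v : Fin 2 → ℝ) :
    fderiv ℝ (fun x => ((x j : ℝ) : ℂ) * f x) s v
      = ((v j : ℝ) : ℂ) * f s + ((s j : ℝ) : ℂ) * fderiv ℝ (⇑f) s v := by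
  set L := Complex.ofRealCLM.comp (ContinuousLinearMap.proj j : (Fin 2 → ℝ) →L[ℝ] ℝ)
    with hLdef
  have hfun : (fun x : Fin 2 → ℝ => ((x j : ℝ) : ℂ) * f x) = fun x => L x * f x := rfl
  rw [hfun, fderiv_fun_mul L.differentiableAt f.differentiableAt]
  simp only [ContinuousLinearMap.fderiv, ContinuousLinearMap.add_apply,
    ContinuousLinearMap.smul_apply, smul_eq_mul]
  have hLv : L v = ((v j : ℝ) : ℂ) := rfl
  have hLs : L s = ((s j : ℝ) : ℂ) := rfl
  rw [hLv, hLs]; ring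

lemma coord_mul_diff (j : Fin 2) (f : Sch) (s : Fin 2 → ℝ) :
    DifferentiableAt ℝ (fun x : Fin 2 → ℝ => ((x j : ℝ) : ℂ) * f x) s :=
  (Complex.ofRealCLM.comp
    (ContinuousLinearMap.proj j : (Fin 2 → ℝ) →L[ℝ] ℝ)).differentiableAt.mul
    f.differentiableAt

/-- Symmetry of second derivatives for Schwartz functions. -/
lemma fderiv_swap (f : Sch) (s v w : Fin 2 → ℝ) :
    fderiv ℝ (fun x => fderiv ℝ (⇑f) x v) s w
      = fderiv ℝ (fun x => fderiv ℝ (⇑f) x w) s v := by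
  have hd : DifferentiableAt ℝ (fderiv ℝ (⇑f)) s := by
    have hcoe : (fderiv ℝ (⇑f)) = ⇑(SchwartzMap.fderivCLM ℝ (Fin 2 → ℝ) ℂ f) := by
      funext x; exact (SchwartzMap.fderivCLM_apply ℝ f x).symm
    rw [hcoe]; exact (SchwartzMap.fderivCLM ℝ (Fin 2 → ℝ) ℂ f).differentiableAt
  have key : ∀ u : Fin 2 → ℝ, fderiv ℝ (fun x => fderiv ℝ (⇑f) x u) s
      = (fderiv ℝ (fderiv ℝ (⇑f)) s).flip u := by
    intro u
    have h := fderiv_clm_apply (c := fderiv ℝ (⇑f)) (u := fun _ => u) hd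
      (differentiableAt_const u)
    simpa using h
  have hsymm : IsSymmSndFDerivAt ℝ (⇑f) s :=
    (f.smooth 2).contDiffAt.isSymmSndFDerivAt (by simp)
  rw [key v, key w]
  exact hsymm w v


/-- fderiv of `M j f`. -/
lemma fderiv_M (j : Fin 2) (f : Sch) (s v : Fin 2 → ℝ) :
    fderiv ℝ (⇑(M j f)) s v
      = ((v j : ℝ) : ℂ) * f s + ((s j : ℝ) : ℂ) * fderiv ℝ (⇑f) s v := by
  have hc : ⇑(M j f) = fun x => ((x j : ℝ) : ℂ) * f x := funext (M_apply j f)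
  rw [hc, fderiv_coord_mul]

lemma Dv_coe (w : Fin 2 → ℝ) (f : Sch) :
    ⇑(Dv w f) = fun x => fderiv ℝ (⇑f) x w := funext (Dv_apply w f)

lemma comb_fderiv (a b : ℂ) (g h : Sch) (s v : Fin 2 → ℝ) :
    fderiv ℝ (⇑(a • g - b • h)) s v = a * fderiv ℝ (⇑g) s v - b * fderiv ℝ (⇑h) s v := by
  have hc : ⇑(a • g - b • h) = fun x => a • g x - b • h x := by
    funext x; simp
  rw [hc, fderiv_fun_sub (f := fun x => a • g x) (g := fun x => b • h x) (g.differentiableAt.const_smul a) (h.differentiableAt.const_smul b),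
    fderiv_fun_const_smul g.differentiableAt a, fderiv_fun_const_smul h.differentiableAt b]
  simp [smul_eq_mul]

variable (α β γ : ℝ)

def P1op : Sch →ₗ[ℂ] Sch := -(M 0)
def Q1op : Sch →ₗ[ℂ] Sch := (β : ℂ) • M 1 - (Complex.I * α) • Dv (Pi.single 0 1)
def P2op : Sch →ₗ[ℂ] Sch := (α : ℂ) • M 1 - (Complex.I * γ) • Dv (Pi.single 0 1)
def Q2op : Sch →ₗ[ℂ] Sch := Complex.I • Dv (Pi.single 1 1)

lemma P1op_apply (f : Sch) (s : Fin 2 → ℝ) : P1op f s = -((s 0 : ℝ) : ℂ) * f s := by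
  show -(M 0 f s) = -((s 0 : ℝ) : ℂ) * f s
  rw [M_apply, neg_mul]

lemma Q1op_apply (f : Sch) (s : Fin 2 → ℝ) :
    Q1op α β f s = ((β * s 1 : ℝ) : ℂ) * f s
      - Complex.I * (α : ℂ) * fderiv ℝ (⇑f) s (Pi.single 0 1) := by
  simp only [Q1op, LinearMap.sub_apply, LinearMap.smul_apply, SchwartzMap.sub_apply,
    SchwartzMap.smul_apply, M_apply, Dv_apply, smul_eq_mul]
  push_cast; ring

lemma P2op_apply (f : Sch) (s : Fin 2 → ℝ) :
    P2op α γ f s = ((α * s 1 : ℝ) : ℂ) * f s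
      - Complex.I * (γ : ℂ) * fderiv ℝ (⇑f) s (Pi.single 0 1) := by
  simp only [P2op, LinearMap.sub_apply, LinearMap.smul_apply, SchwartzMap.sub_apply,
    SchwartzMap.smul_apply, M_apply, Dv_apply, smul_eq_mul]
  push_cast; ring

lemma Q2op_apply (f : Sch) (s : Fin 2 → ℝ) :
    Q2op f s = Complex.I * fderiv ℝ (⇑f) s (Pi.single 1 1) := by
  simp [Q2op, Dv_apply, smul_eq_mul]

lemma P1op_fderiv (f : Sch) (s v : Fin 2 → ℝ) :
    fderiv ℝ (⇑(P1op f)) s v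
      = -(((v 0 : ℝ) : ℂ) * f s + ((s 0 : ℝ) : ℂ) * fderiv ℝ (⇑f) s v) := by
  have hc : ⇑(P1op f) = fun x => -(((x 0 : ℝ) : ℂ) * f x) := by
    funext x; rw [P1op_apply]; ring
  rw [hc, fderiv_fun_neg]
  simp [fderiv_coord_mul]

lemma Q1op_fderiv (f : Sch) (s v : Fin 2 → ℝ) :
    fderiv ℝ (⇑(Q1op α β f)) s v
      = (β : ℂ) * (((v 1 : ℝ) : ℂ) * f s + ((s 1 : ℝ) : ℂ) * fderiv ℝ (⇑f) s v)
        - (Complex.I * α) * fderiv ℝ (fun x => fderiv ℝ (⇑f) x (Pi.single 0 1)) s v := by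
  have h : Q1op α β f
      = (β : ℂ) • (M 1 f) - (Complex.I * α) • (Dv (Pi.single 0 1) f) := rfl
  rw [h, comb_fderiv, fderiv_M, Dv_coe]

lemma P2op_fderiv (f : Sch) (s v : Fin 2 → ℝ) :
    fderiv ℝ (⇑(P2op α γ f)) s v
      = (α : ℂ) * (((v 1 : ℝ) : ℂ) * f s + ((s 1 : ℝ) : ℂ) * fderiv ℝ (⇑f) s v)
        - (Complex.I * γ) * fderiv ℝ (fun x => fderiv ℝ (⇑f) x (Pi.single 0 1)) s v := by
  have h : P2op α γ f
      = (α : ℂ) • (M 1 f) - (Complex.I * γ) • (Dv (Pi.single 0 1) f) := rfl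
  rw [h, comb_fderiv, fderiv_M, Dv_coe]

lemma Q2op_fderiv (f : Sch) (s v : Fin 2 → ℝ) :
    fderiv ℝ (⇑(Q2op f)) s v
      = Complex.I * fderiv ℝ (fun x => fderiv ℝ (⇑f) x (Pi.single 1 1)) s v := by
  have hc : ⇑(Q2op f) = fun x => Complex.I • (Dv (Pi.single 1 1) f) x := by
    funext x; simp [Q2op]
  rw [hc, fderiv_fun_const_smul (Dv (Pi.single 1 1) f).differentiableAt Complex.I]
  simp [smul_eq_mul, Dv_coe]

lemma single_vals :
    (Pi.single 0 1 : Fin 2 → ℝ) 0 = 1 ∧ (Pi.single 0 1 : Fin 2 → ℝ) 1 = 0 ∧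
    (Pi.single 1 1 : Fin 2 → ℝ) 0 = 0 ∧ (Pi.single 1 1 : Fin 2 → ℝ) 1 = 1 := by
  refine ⟨Pi.single_eq_same _ _, ?_, ?_, Pi.single_eq_same _ _⟩ <;>
    · rw [Pi.single_eq_of_ne (by decide)]

lemma comm1 (f : Sch) :
    Q1op α β (P1op f) - P1op (Q1op α β f) = (Complex.I * (α : ℂ)) • f := by
  ext s
  obtain ⟨h00, h01, h10, h11⟩ := single_vals
  rw [SchwartzMap.sub_apply, SchwartzMap.smul_apply, Q1op_apply, P1op_apply, P1op_apply,
    Q1op_apply, P1op_fderiv, h00]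
  push_cast
  simp only [smul_eq_mul]
  ring

lemma comm2 (f : Sch) :
    Q2op (P2op α γ f) - P2op α γ (Q2op f) = (Complex.I * (α : ℂ)) • f := by
  ext s
  obtain ⟨h00, h01, h10, h11⟩ := single_vals
  rw [SchwartzMap.sub_apply, SchwartzMap.smul_apply, Q2op_apply, P2op_fderiv, P2op_apply,
    Q2op_apply, Q2op_fderiv, fderiv_swap f s (Pi.single 0 1) (Pi.single 1 1), h11]
  push_cast
  simp only [smul_eq_mul]
  ring

lemma comm3 (f : Sch) :
    Q1op α β (P2op α γ f) - P2op α γ (Q1op α β f) = 0 := by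
  ext s
  obtain ⟨h00, h01, h10, h11⟩ := single_vals
  rw [SchwartzMap.sub_apply, Q1op_apply, P2op_apply, P2op_fderiv, P2op_apply, Q1op_apply,
    Q1op_fderiv, h01]
  push_cast
  change _ = (0 : ℂ)
  ring

lemma comm4 (f : Sch) :
    Q2op (P1op f) - P1op (Q2op f) = 0 := by
  ext s
  obtain ⟨h00, h01, h10, h11⟩ := single_vals
  rw [SchwartzMap.sub_apply, Q2op_apply, P1op_fderiv, P1op_apply, Q2op_apply, h10]
  push_cast
  change _ = (0 : ℂ)
  ring

lemma comm5 (f : Sch) :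
    Q1op α β (Q2op f) - Q2op (Q1op α β f) = (-(Complex.I * (β : ℂ))) • f := by
  ext s
  obtain ⟨h00, h01, h10, h11⟩ := single_vals
  rw [SchwartzMap.sub_apply, SchwartzMap.smul_apply, Q1op_apply, Q2op_apply, Q2op_apply,
    Q1op_fderiv, Q2op_fderiv, fderiv_swap f s (Pi.single 1 1) (Pi.single 0 1), h11]
  push_cast
  simp only [smul_eq_mul]
  ring

lemma comm6 (f : Sch) :
    P1op (P2op α γ f) - P2op α γ (P1op f) = (-(Complex.I * (γ : ℂ))) • f := by
  ext s
  obtain ⟨h00, h01, h10, h11⟩ := single_vals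
  rw [SchwartzMap.sub_apply, SchwartzMap.smul_apply, P1op_apply, P2op_apply, P2op_apply,
    P1op_apply, P1op_fderiv, h00]
  push_cast
  simp only [smul_eq_mul]
  ring

end TripleExtAux

open TripleExtAux SchwartzMap

/-- The operators representing the noncentral generators of the triply centrally
extended group of translations of ℝ⁴ map `𝒮(ℝ², ℂ)` to itself and satisfy
`[Q̂_j, P̂_k] = iα δ_{jk} I`, `[Q̂₁, Q̂₂] = −iβ I`, `[P̂₁, P̂₂] = −iγ I`: there are
linear operators `P̂₁, Q̂₁, P̂₂, Q̂₂` on `𝒮(ℝ², ℂ)` acting by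
`(P̂₁f)(s₁,s₂) = −s₁ f`, `(Q̂₁f)(s₁,s₂) = βs₂ f − iα ∂f/∂s₁`,
`(P̂₂f)(s₁,s₂) = αs₂ f − iγ ∂f/∂s₁`, `(Q̂₂f)(s₁,s₂) = i ∂f/∂s₂`, and they obey the
stated commutation relations. -/
theorem triply_extended_operators_commutation (α β γ : ℝ) :
    ∃ P₁ Q₁ P₂ Q₂ : Sch →ₗ[ℂ] Sch,
      (∀ (f : Sch) (s : Fin 2 → ℝ), P₁ f s = -((s 0 : ℝ) : ℂ) * f s) ∧
      (∀ (f : Sch) (s : Fin 2 → ℝ), Q₁ f s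
        = ((β * s 1 : ℝ) : ℂ) * f s
          - Complex.I * (α : ℂ) * fderiv ℝ (⇑f) s (Pi.single 0 1)) ∧
      (∀ (f : Sch) (s : Fin 2 → ℝ), P₂ f s
        = ((α * s 1 : ℝ) : ℂ) * f s
          - Complex.I * (γ : ℂ) * fderiv ℝ (⇑f) s (Pi.single 0 1)) ∧
      (∀ (f : Sch) (s : Fin 2 → ℝ), Q₂ f s
        = Complex.I * fderiv ℝ (⇑f) s (Pi.single 1 1)) ∧
      (∀ f : Sch, Q₁ (P₁ f) - P₁ (Q₁ f) = (Complex.I * (α : ℂ)) • f) ∧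
      (∀ f : Sch, Q₂ (P₂ f) - P₂ (Q₂ f) = (Complex.I * (α : ℂ)) • f) ∧
      (∀ f : Sch, Q₁ (P₂ f) - P₂ (Q₁ f) = 0) ∧
      (∀ f : Sch, Q₂ (P₁ f) - P₁ (Q₂ f) = 0) ∧
      (∀ f : Sch, Q₁ (Q₂ f) - Q₂ (Q₁ f) = (-(Complex.I * (β : ℂ))) • f) ∧
      (∀ f : Sch, P₁ (P₂ f) - P₂ (P₁ f) = (-(Complex.I * (γ : ℂ))) • f) :=
  ⟨TripleExtAux.P1op, TripleExtAux.Q1op α β, TripleExtAux.P2op α γ, TripleExtAux.Q2op,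
    TripleExtAux.P1op_apply, TripleExtAux.Q1op_apply α β, TripleExtAux.P2op_apply α γ,
    TripleExtAux.Q2op_apply, TripleExtAux.comm1 α β, TripleExtAux.comm2 α γ,
    TripleExtAux.comm3 α β γ, TripleExtAux.comm4, TripleExtAux.comm5 α β,
    TripleExtAux.comm6 α γ⟩

end
end
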